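/- Let λ and χ be reals with 4 ≤ λ < 12 and χ ≥ 4, and define g(n) = ((λ−4)²/(4n))χ² + (λ−4 + λ/(2n))χ + n + 1 for real n > 0. Then g(2) ≥ g((λ−3)χ/2). -/

import Mathlib

theorem stmt_6 (lam χ : ℝ) (h1 : 4 ≤ lam) (h2 : lam < 12) (h3 : 4 ≤ χ)
    (G : ℝ → ℝ)
    (hG : ∀ n, G n = (lam - 4)^2/(4*n) * χ^2 + (lam - 4 + lam/(2*n)) * χ + n + 1) :
    G 2 ≥ G ((lam - 3) * χ / 2) := by
  have hpos : (0:ℝ) < (lam - 3) * χ := by nlinarith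
  have h : (lam - 3) * χ ≠ 0 := ne_of_gt hpos
  have key : G 2 - G ((lam - 3) * χ / 2) =
      (((lam - 3) * χ / 2 - 2) * ((lam - 4)^2 * χ^2 / 4 + lam * χ / 2 - (lam - 3) * χ)) /
        ((lam - 3) * χ) := by
    rw [hG, hG]
    have hl3 : lam - 3 ≠ 0 := (by linarith : (0:ℝ) < lam - 3).ne'
    have hχ0 : χ ≠ 0 := (by linarith : (0:ℝ) < χ).ne'
    field_simp
    ring
  have hf1 : (0:ℝ) ≤ (lam - 3) * χ / 2 - 2 := by nlinarith
  have hf2 : (0:ℝ) ≤ (lam - 4)^2 * χ^2 / 4 + lam * χ / 2 - (lam - 3) * χ := by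
    nlinarith [sq_nonneg (lam - 4), mul_nonneg (sq_nonneg (lam - 4)) (by linarith : (0:ℝ) ≤ χ - 4), sq_nonneg ((lam-4)*χ)]
  have : 0 ≤ G 2 - G ((lam - 3) * χ / 2) := by
    rw [key]
    positivity
  linarith
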